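/- For every traceless complex 2×2 matrix A, one has tr([A,[A,A*]]·A* + A·[[A,A*],A*]) = 4(4|det(A)|² - tr(AA*)²) ≤ 0, with equality if and only if A is normal; in particular the flow of W(A) = (1/4)[A,[A,A*]] does not increase the Frobenius norm. -/

import Mathlib

open Matrix

/-- For a traceless complex 2×2 matrix `A` with `K = [A,Aᴴ]`:
`tr([A,K]·Aᴴ + A·[K,Aᴴ]) = 4(4|det A|² - tr(AAᴴ)²) ≤ 0`, with equality iff `A` is
normal; in particular the flow of `W(A) = (1/4)[A,[A,Aᴴ]]` does not increase the
Frobenius norm. -/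
theorem sl2_Lie_derivative_norm_nonpos (A : Matrix (Fin 2) (Fin 2) ℂ)
    (hA : Matrix.trace A = 0)
    (K : Matrix (Fin 2) (Fin 2) ℂ) (hK : K = A * Aᴴ - Aᴴ * A) :
    Matrix.trace ((A * K - K * A) * Aᴴ + A * (K * Aᴴ - Aᴴ * K)) =
      ((4 * (4 * ‖Matrix.det A‖ ^ 2 - ((Matrix.trace (A * Aᴴ)).re) ^ 2) : ℝ) : ℂ) ∧
    4 * (4 * ‖Matrix.det A‖ ^ 2 - ((Matrix.trace (A * Aᴴ)).re) ^ 2) ≤ 0 ∧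
    (4 * (4 * ‖Matrix.det A‖ ^ 2 - ((Matrix.trace (A * Aᴴ)).re) ^ 2) = 0
      ↔ A * Aᴴ = Aᴴ * A) := by
  have hnsq : ∀ z : ℂ, ((Complex.normSq z : ℝ) : ℂ) = z * star z := fun z => by
    rw [Complex.star_def, Complex.mul_conj]
  set a := A 0 0 with ha
  set b := A 0 1 with hb
  set c := A 1 0 with hc
  have hd : A 1 1 = -a := by
    rw [Matrix.trace_fin_two] at hA
    linear_combination hA
  set w : ℂ := a * star c - star a * b with hw
  have hz : A.det = -a ^ 2 - b * c := by
    rw [Matrix.det_fin_two, hd]; ring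
  -- trace (A * Aᴴ) is real
  have ht : Matrix.trace (A * Aᴴ) =
      ((2 * Complex.normSq a + Complex.normSq b + Complex.normSq c : ℝ) : ℂ) := by
    rw [Matrix.trace_fin_two]
    simp only [Matrix.mul_apply, Fin.sum_univ_two, Matrix.conjTranspose_apply, hd, star_neg, star_sub, star_mul', star_pow, star_star]
    push_cast
    rw [hnsq, hnsq, hnsq]
    ring
  have htre : (Matrix.trace (A * Aᴴ)).re =
      2 * Complex.normSq a + Complex.normSq b + Complex.normSq c := by
    rw [ht]; simp
  -- key complex trace identity
  have key : Matrix.trace ((A * K - K * A) * Aᴴ + A * (K * Aᴴ - Aᴴ * K)) =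
      4 * (4 * (A.det * star A.det) - (Matrix.trace (A * Aᴴ)) ^ 2) := by
    subst hK
    rw [hz, Matrix.trace_fin_two, Matrix.trace_fin_two]
    simp only [Matrix.mul_apply, Matrix.sub_apply, Matrix.add_apply, Fin.sum_univ_two, Matrix.conjTranspose_apply, hd, star_neg, star_sub, star_mul', star_pow, star_star]
    ring
  -- sum of squares identity
  have sosC : ((Matrix.trace (A * Aᴴ)).re ^ 2 - 4 * ‖A.det‖ ^ 2 : ℝ) =
      (Complex.normSq b - Complex.normSq c) ^ 2 + 4 * Complex.normSq w := by
    have : (((Matrix.trace (A * Aᴴ)).re ^ 2 - 4 * ‖A.det‖ ^ 2 : ℝ) : ℂ) =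
        (((Complex.normSq b - Complex.normSq c) ^ 2 + 4 * Complex.normSq w : ℝ) : ℂ) := by
      rw [Complex.sq_norm]
      push_cast
      rw [hnsq, hnsq, hnsq, hnsq, htre]
      push_cast
      rw [hnsq, hnsq, hnsq, hz, hw]
      simp only [star_sub, star_mul', star_star, star_neg, star_pow]
      ring
    exact_mod_cast this
  constructor
  · rw [key, ht]
    have habs : A.det * star A.det = ((‖A.det‖ ^ 2 : ℝ) : ℂ) := by
      rw [Complex.sq_norm, hnsq]
    rw [habs]
    simp only [Complex.ofReal_re]
    push_cast
    ring
  constructor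
  · nlinarith [Complex.normSq_nonneg w, sq_nonneg (Complex.normSq b - Complex.normSq c)]
  constructor
  · intro h0
    have h1 : (Complex.normSq b - Complex.normSq c) ^ 2 + 4 * Complex.normSq w = 0 := by
      linarith [sosC]
    have hbc : Complex.normSq b = Complex.normSq c := by
      nlinarith [Complex.normSq_nonneg w, sq_nonneg (Complex.normSq b - Complex.normSq c)]
    have hw0 : w = 0 := by
      have : Complex.normSq w = 0 := by nlinarith [sq_nonneg (Complex.normSq b - Complex.normSq c)]
      exact Complex.normSq_eq_zero.mp this
    have hbc' : b * star b = c * star c := by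
      rw [← hnsq, ← hnsq, hbc]
    have hw' : a * star c - star a * b = 0 := hw ▸ hw0
    ext i j
    fin_cases i <;> fin_cases j <;>
      simp only [Matrix.mul_apply, Fin.sum_univ_two,
        Matrix.conjTranspose_apply, hd, star_neg, star_star, Fin.mk_zero, Fin.mk_one,
        Fin.isValue] <;>
      [skip; skip; (have hw'' := congrArg star hw'; simp only [star_sub, star_mul',
        star_star, star_zero] at hw''); skip]
    · linear_combination hbc'
    · linear_combination 2 * hw'
    · linear_combination 2 * hw''
    · linear_combination -hbc'
  · intro hcomm
    have e00 := congrFun (congrFun hcomm 0) 0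
    have e01 := congrFun (congrFun hcomm 0) 1
    simp only [Matrix.mul_apply, Fin.sum_univ_two, Matrix.conjTranspose_apply, hd, star_neg, star_star] at e00 e01
    have hbc' : b * star b = c * star c := by linear_combination e00
    have hw0 : w = 0 := by rw [hw]; linear_combination e01 / 2
    have hbc : Complex.normSq b = Complex.normSq c := by
      have : ((Complex.normSq b : ℝ) : ℂ) = ((Complex.normSq c : ℝ) : ℂ) := by
        rw [hnsq, hnsq]; exact hbc'
      exact_mod_cast this
    have : Complex.normSq w = 0 := by rw [hw0]; simp
    nlinarith [sosC]
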